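/- For matrices A, M ∈ R^{m×r}, det((A+M)^T(A+M)) ≤ det(A^T A) + (‖A‖ + ‖M‖)^{2r} − ‖A‖^{2r}, where ‖·‖ denotes the spectral norm. -/

import Mathlib

open scoped BigOperators
open Matrix

/-- Spectral norm (operator 2-norm) of a matrix. -/
noncomputable def specNorm {m n : Type*} [Fintype m] [Fintype n] [DecidableEq n]
    (A : Matrix m n ℝ) : ℝ :=
  ‖LinearMap.toContinuousLinearMap (Matrix.toEuclideanLin A)‖

section Aux

open Finset

theorem stmt13_trace_eq_sum_eig {n : Type*} [Fintype n] [DecidableEq n] {Q : Matrix n n ℝ}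
    (hQ : Q.IsHermitian) : Q.trace = ∑ i, hQ.eigenvalues i := by
  simpa using hQ.trace_eq_sum_eigenvalues

theorem stmt13_psd_diag_nonneg {n : Type*} [Fintype n] [DecidableEq n] {P : Matrix n n ℝ}
    (hP : P.PosSemidef) (i : n) : 0 ≤ P i i := by
  have := hP.dotProduct_mulVec_nonneg (Pi.single i 1)
  simpa [Matrix.mulVec_single, single_dotProduct] using this

theorem stmt13_psd_col_zero {n : Type*} [Fintype n] [DecidableEq n] {P : Matrix n n ℝ}
    (hP : P.PosSemidef) {i : n} (hi : P i i = 0) (j : n) : P j i = 0 := by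
  by_cases hji : j = i
  · subst hji; exact hi
  · have hsym : P i j = P j i := by
      have h := congrFun (congrFun hP.1 i) j
      simpa using h.symm
    have key : ∀ c : ℝ, 0 ≤ P j j * (c * c) + (2 * P j i) * c + 0 := by
      intro c
      set x : n → ℝ := Pi.single i 1 with hx
      set y : n → ℝ := Pi.single j 1 with hy
      have h := hP.dotProduct_mulVec_nonneg (x + c • y)
      rw [hx, hy] at h
      rw [star_trivial] at h
      simp only [Matrix.mulVec_add, Matrix.mulVec_smul, Matrix.mulVec_single,
        add_dotProduct, smul_dotProduct, dotProduct_add,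
        dotProduct_smul, single_dotProduct, smul_eq_mul, mul_one,
        Matrix.col_apply, MulOpposite.op_one, one_smul, one_mul] at h
      rw [hi, hsym] at h
      nlinarith [h]
    have hd := discrim_le_zero key
    rw [discrim] at hd
    nlinarith [hd]

theorem stmt13_det_nonneg {n : Type*} [Fintype n] [DecidableEq n] {Q : Matrix n n ℝ}
    (hQ : Q.PosSemidef) : 0 ≤ Q.det := by
  rw [hQ.1.det_eq_prod_eigenvalues]
  exact Finset.prod_nonneg fun i _ => by simpa using hQ.eigenvalues_nonneg i

theorem stmt13_hadamard_psd {n : Type*} [Fintype n] [DecidableEq n] {P : Matrix n n ℝ}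
    (hP : P.PosSemidef) : P.det ≤ ∏ i, P i i := by
  by_cases hz : ∃ i, P i i = 0
  · obtain ⟨i, hi⟩ := hz
    rw [Matrix.det_eq_zero_of_column_eq_zero i (stmt13_psd_col_zero hP hi)]
    exact Finset.prod_nonneg fun j _ => stmt13_psd_diag_nonneg hP j
  · push_neg at hz
    have hpos : ∀ i, 0 < P i i := fun i => (stmt13_psd_diag_nonneg hP i).lt_of_ne' (hz i)
    set d : n → ℝ := fun i => (Real.sqrt (P i i))⁻¹ with hd
    have hQpsd : (diagonal d * P * diagonal d).PosSemidef := by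
      have h := hP.mul_mul_conjTranspose_same (diagonal d)
      rwa [Matrix.diagonal_conjTranspose, star_trivial] at h
    set Q := diagonal d * P * diagonal d with hQ
    have hQdiag : ∀ i, Q i i = 1 := by
      intro i
      rw [hQ, Matrix.mul_diagonal, Matrix.diagonal_mul, hd]
      have hs : Real.sqrt (P i i) ≠ 0 := ne_of_gt (Real.sqrt_pos.mpr (hpos i))
      field_simp
      exact (Real.sq_sqrt (hpos i).le).symm
    have hμ0 : ∀ i, 0 ≤ hQpsd.1.eigenvalues i := hQpsd.eigenvalues_nonneg
    have hdetQ : Q.det = ∏ i, hQpsd.1.eigenvalues i := by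
      simpa using hQpsd.1.det_eq_prod_eigenvalues
    have hQdet1 : Q.det ≤ 1 := by
      rcases isEmpty_or_nonempty n with h | h
      · simp [Matrix.det_isEmpty, hQ]
      · set N := Fintype.card n with hN
        have hNpos : 0 < N := Fintype.card_pos
        have hN0 : (N : ℝ) ≠ 0 := Nat.cast_ne_zero.mpr hNpos.ne'
        have hsum : ∑ i, hQpsd.1.eigenvalues i = (N : ℝ) := by
          rw [← stmt13_trace_eq_sum_eig hQpsd.1, Matrix.trace]
          simp only [Matrix.diag]
          rw [Finset.sum_congr rfl fun i _ => hQdiag i]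
          simp [hN, Finset.card_univ]
        have hgm := Real.geom_mean_le_arith_mean_weighted univ (fun _ => (N : ℝ)⁻¹)
          hQpsd.1.eigenvalues (fun i _ => by positivity)
          (by rw [Finset.sum_const, Finset.card_univ, ← hN, nsmul_eq_mul]
              exact mul_inv_cancel₀ hN0)
          (fun i _ => hμ0 i)
        have h1 : (∏ i, hQpsd.1.eigenvalues i) ^ ((N : ℝ)⁻¹) ≤ 1 := by
          rw [← Real.finset_prod_rpow univ _ (fun i _ => hμ0 i)]
          refine le_trans hgm (le_of_eq ?_)
          rw [← Finset.mul_sum, hsum]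
          exact inv_mul_cancel₀ hN0
        have hprod0 : 0 ≤ ∏ i, hQpsd.1.eigenvalues i := Finset.prod_nonneg fun i _ => hμ0 i
        have heq : (∏ i, hQpsd.1.eigenvalues i)
            = ((∏ i, hQpsd.1.eigenvalues i) ^ ((N:ℝ)⁻¹)) ^ (N : ℕ) := by
          rw [← Real.rpow_natCast ((∏ i, hQpsd.1.eigenvalues i) ^ ((N:ℝ)⁻¹)) N,
            ← Real.rpow_mul hprod0, inv_mul_cancel₀ hN0, Real.rpow_one]
        rw [hdetQ, heq]
        calc ((∏ i, hQpsd.1.eigenvalues i) ^ ((N:ℝ)⁻¹)) ^ (N:ℕ) ≤ 1 ^ (N:ℕ) :=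
              pow_le_pow_left₀ (Real.rpow_nonneg hprod0 _) h1 N
          _ = 1 := one_pow N
    have hdetrel : Q.det = (∏ i, d i)^2 * P.det := by
      rw [hQ, Matrix.det_mul, Matrix.det_mul, Matrix.det_diagonal]
      ring
    have hprodd : (∏ i, d i)^2 = (∏ i, P i i)⁻¹ := by
      rw [← Finset.prod_pow, ← Finset.prod_inv_distrib]
      refine Finset.prod_congr rfl fun i _ => ?_
      rw [hd, inv_pow, Real.sq_sqrt (hpos i).le]
    have hPpos : 0 < ∏ i, P i i := Finset.prod_pos fun i _ => hpos i
    rw [hdetrel, hprodd] at hQdet1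
    calc P.det = (∏ i, P i i) * ((∏ i, P i i)⁻¹ * P.det) := by field_simp
      _ ≤ (∏ i, P i i) * 1 := mul_le_mul_of_nonneg_left hQdet1 (le_of_lt hPpos)
      _ = ∏ i, P i i := mul_one _

theorem stmt13_gram_psd {m r : ℕ} (U : Matrix (Fin m) (Fin r) ℝ) : (Uᵀ * U).PosSemidef := by
  simpa using Matrix.posSemidef_conjTranspose_mul_self U

theorem stmt13_upd_transpose {m r : ℕ} (W : Matrix (Fin m) (Fin r) ℝ) (i : Fin r)
    (z : Fin m → ℝ) : (W.updateCol i z)ᵀ = Wᵀ.updateRow i z := by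
  ext j k
  by_cases h : j = i <;>
    simp [Matrix.transpose_apply, Matrix.updateRow_apply, Matrix.updateCol_apply, h]

theorem stmt13_updateRow_mul {m r : ℕ} (B : Matrix (Fin r) (Fin m) ℝ)
    (V : Matrix (Fin m) (Fin r) ℝ) (i : Fin r) (z : Fin m → ℝ) :
    (B.updateRow i z) * V = (B * V).updateRow i (z ᵥ* V) := by
  ext j k
  by_cases h : j = i <;>
    simp [Matrix.mul_apply, Matrix.updateRow_apply, h, Matrix.vecMul, dotProduct]

theorem stmt13_mul_updateColumn {m r : ℕ} (U : Matrix (Fin r) (Fin m) ℝ)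
    (W : Matrix (Fin m) (Fin r) ℝ) (i : Fin r) (z : Fin m → ℝ) :
    U * (W.updateCol i z) = (U * W).updateCol i (U *ᵥ z) := by
  ext j k
  by_cases h : k = i <;>
    simp [Matrix.mul_apply, Matrix.updateCol_apply, h, Matrix.mulVec, dotProduct,
      mul_comm]

theorem stmt13_gram_sym {m r : ℕ} (U V : Matrix (Fin m) (Fin r) ℝ) :
    (Uᵀ * V).det = (Vᵀ * U).det := by
  rw [← Matrix.det_transpose, Matrix.transpose_mul, Matrix.transpose_transpose]

theorem stmt13_gram_expand {m r : ℕ} (W : Matrix (Fin m) (Fin r) ℝ) (i : Fin r)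
    (x y : Fin m → ℝ) (c : ℝ) :
    ((W.updateCol i (x + c • y))ᵀ * (W.updateCol i (x + c • y))).det
      = ((W.updateCol i x)ᵀ * (W.updateCol i x)).det
        + 2 * c * ((W.updateCol i x)ᵀ * (W.updateCol i y)).det
        + c ^ 2 * ((W.updateCol i y)ᵀ * (W.updateCol i y)).det := by
  have hL : ∀ (z : Fin m → ℝ) (V : Matrix (Fin m) (Fin r) ℝ),
      (W.updateCol i z)ᵀ * V = (Wᵀ * V).updateRow i (z ᵥ* V) := fun z V => by
    rw [stmt13_upd_transpose, stmt13_updateRow_mul]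
  have hR : ∀ (U : Matrix (Fin m) (Fin r) ℝ) (z : Fin m → ℝ),
      Uᵀ * (W.updateCol i z) = (Uᵀ * W).updateCol i (Uᵀ *ᵥ z) := fun U z => by
    rw [stmt13_mul_updateColumn]
  have hLadd : ∀ (z w : Fin m → ℝ) (V : Matrix (Fin m) (Fin r) ℝ),
      ((W.updateCol i (z + w))ᵀ * V).det
        = ((W.updateCol i z)ᵀ * V).det + ((W.updateCol i w)ᵀ * V).det := by
    intro z w V
    rw [hL, hL, hL, Matrix.add_vecMul, Matrix.det_updateRow_add]
  have hLsmul : ∀ (a : ℝ) (z : Fin m → ℝ) (V : Matrix (Fin m) (Fin r) ℝ),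
      ((W.updateCol i (a • z))ᵀ * V).det = a * ((W.updateCol i z)ᵀ * V).det := by
    intro a z V
    rw [hL, hL, Matrix.smul_vecMul, Matrix.det_updateRow_smul]
  have hRadd : ∀ (U : Matrix (Fin m) (Fin r) ℝ) (z w : Fin m → ℝ),
      (Uᵀ * (W.updateCol i (z + w))).det
        = (Uᵀ * (W.updateCol i z)).det + (Uᵀ * (W.updateCol i w)).det := by
    intro U z w
    rw [hR U, hR U, hR U, Matrix.mulVec_add, Matrix.det_updateCol_add]
  have hRsmul : ∀ (U : Matrix (Fin m) (Fin r) ℝ) (a : ℝ) (z : Fin m → ℝ),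
      (Uᵀ * (W.updateCol i (a • z))).det = a * (Uᵀ * (W.updateCol i z)).det := by
    intro U a z
    rw [hR U, hR U, Matrix.mulVec_smul, Matrix.det_updateCol_smul]
  have step1 : ((W.updateCol i (x + c • y))ᵀ * (W.updateCol i (x + c • y))).det
      = ((W.updateCol i x)ᵀ * (W.updateCol i (x + c • y))).det
        + c * ((W.updateCol i y)ᵀ * (W.updateCol i (x + c • y))).det := by
    rw [hLadd, hLsmul]
  rw [step1, hRadd, hRadd, hRsmul, hRsmul, stmt13_gram_sym (W.updateCol i y) (W.updateCol i x)]
  ring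

theorem stmt13_gram_sqrt_triangle {m r : ℕ} (W : Matrix (Fin m) (Fin r) ℝ) (i : Fin r)
    (x y : Fin m → ℝ) :
    Real.sqrt (((W.updateCol i (x + y))ᵀ * (W.updateCol i (x + y))).det)
      ≤ Real.sqrt (((W.updateCol i x)ᵀ * (W.updateCol i x)).det)
        + Real.sqrt (((W.updateCol i y)ᵀ * (W.updateCol i y)).det) := by
  set gx := ((W.updateCol i x)ᵀ * (W.updateCol i x)).det with hgx
  set gy := ((W.updateCol i y)ᵀ * (W.updateCol i y)).det with hgy
  set F := ((W.updateCol i x)ᵀ * (W.updateCol i y)).det with hF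
  have hgx0 : 0 ≤ gx := stmt13_det_nonneg (stmt13_gram_psd _)
  have hgy0 : 0 ≤ gy := stmt13_det_nonneg (stmt13_gram_psd _)
  have key : ∀ c : ℝ, 0 ≤ gy * (c * c) + (2 * F) * c + gx := by
    intro c
    have h := stmt13_det_nonneg (stmt13_gram_psd (W.updateCol i (x + c • y)))
    rw [stmt13_gram_expand W i x y c] at h
    nlinarith [h]
  have hd := discrim_le_zero key
  rw [discrim] at hd
  have hFle : F ≤ Real.sqrt gx * Real.sqrt gy := by
    nlinarith [Real.sq_sqrt hgx0, Real.sq_sqrt hgy0, Real.sqrt_nonneg gx, Real.sqrt_nonneg gy,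
      hd, mul_nonneg (Real.sqrt_nonneg gx) (Real.sqrt_nonneg gy),
      sq_nonneg (Real.sqrt gx * Real.sqrt gy + F), sq_nonneg (Real.sqrt gx * Real.sqrt gy - F)]
  have hexp : ((W.updateCol i (x + y))ᵀ * (W.updateCol i (x + y))).det
      = gx + 2 * F + gy := by
    have h := stmt13_gram_expand W i x y 1
    simpa using h
  calc Real.sqrt (((W.updateCol i (x + y))ᵀ * (W.updateCol i (x + y))).det)
      ≤ Real.sqrt ((Real.sqrt gx + Real.sqrt gy) ^ 2) := by
        apply Real.sqrt_le_sqrt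
        rw [hexp]
        nlinarith [Real.sq_sqrt hgx0, Real.sq_sqrt hgy0, hFle]
    _ = Real.sqrt gx + Real.sqrt gy := Real.sqrt_sq (by positivity)

theorem stmt13_specNorm_nonneg {m n : Type*} [Fintype m] [Fintype n] [DecidableEq n]
    (A : Matrix m n ℝ) : 0 ≤ specNorm A := norm_nonneg _

theorem stmt13_specNorm_add_le {m n : Type*} [Fintype m] [Fintype n] [DecidableEq n]
    (A B : Matrix m n ℝ) : specNorm (A + B) ≤ specNorm A + specNorm B := by
  unfold specNorm
  rw [map_add, map_add]
  exact norm_add_le _ _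

theorem stmt13_col_sq_sum_le {m n : Type*} [Fintype m] [Fintype n] [DecidableEq n]
    (A : Matrix m n ℝ) (j : n) : ∑ i, (A i j) ^ 2 ≤ (specNorm A) ^ 2 := by
  set L := LinearMap.toContinuousLinearMap (Matrix.toEuclideanLin A) with hL
  set e : EuclideanSpace ℝ n := EuclideanSpace.single j (1 : ℝ) with he
  have hnorme : ‖e‖ = 1 := by simp [he, EuclideanSpace.norm_single]
  have h1 : ‖L e‖ ≤ specNorm A := by
    have := L.le_opNorm e
    rwa [hnorme, mul_one] at this
  have h2 : ‖L e‖ ^ 2 = ∑ i, (A i j) ^ 2 := by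
    have hLe : L e = (WithLp.equiv 2 (m → ℝ)).symm (A *ᵥ Pi.single j 1) := by
      show Matrix.toEuclideanLin A e = _
      rw [he, EuclideanSpace.single]
      rfl
    rw [hLe, EuclideanSpace.norm_eq, Real.sq_sqrt (by positivity)]
    refine Finset.sum_congr rfl fun i _ => ?_
    simp [Matrix.mulVec_single, sq_abs]
  calc ∑ i, (A i j) ^ 2 = ‖L e‖ ^ 2 := h2.symm
    _ ≤ (specNorm A) ^ 2 := pow_le_pow_left₀ (norm_nonneg _) h1 2

theorem stmt13_sqrt_det_le_prod {m r : ℕ} (U : Matrix (Fin m) (Fin r) ℝ) (b : Fin r → ℝ)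
    (hb : ∀ j, 0 ≤ b j) (hcol : ∀ j, ∑ i, (U i j) ^ 2 ≤ (b j) ^ 2) :
    Real.sqrt ((Uᵀ * U).det) ≤ ∏ j, b j := by
  have hdiag : ∀ j, (Uᵀ * U) j j = ∑ i, (U i j) ^ 2 := fun j => by
    simp [Matrix.mul_apply, sq]
  have h1 : (Uᵀ * U).det ≤ ∏ j, (b j) ^ 2 := by
    refine (stmt13_hadamard_psd (stmt13_gram_psd U)).trans ?_
    refine Finset.prod_le_prod (fun j _ => ?_) (fun j _ => ?_)
    · rw [hdiag]; positivity
    · rw [hdiag]; exact hcol j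
  calc Real.sqrt ((Uᵀ * U).det) ≤ Real.sqrt (∏ j, (b j) ^ 2) := Real.sqrt_le_sqrt h1
    _ = ∏ j, b j := by
        rw [Finset.prod_pow, Real.sqrt_sq (Finset.prod_nonneg fun j _ => hb j)]

theorem stmt13_prod_fin_split (r k : ℕ) (hk : k < r) (a t : ℝ) :
    (∏ j : Fin r, (if (j : ℕ) = k then t else if (j : ℕ) < k then a else a + t))
      = a ^ k * t * (a + t) ^ (r - (k + 1)) := by
  rw [Fin.prod_univ_eq_prod_range (fun n => if n = k then t else if n < k then a else a + t) r]
  rw [← Finset.prod_range_mul_prod_Ico _ (Nat.succ_le_of_lt hk), Finset.prod_range_succ]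
  have h1 : (∏ x ∈ Finset.range k, (if x = k then t else if x < k then a else a + t)) = a ^ k := by
    rw [Finset.prod_congr rfl (fun x hx => ?_), Finset.prod_const, Finset.card_range]
    have hx' := Finset.mem_range.mp hx
    rw [if_neg (by omega), if_pos hx']
  have h2 : (∏ x ∈ Finset.Ico (k+1) r, (if x = k then t else if x < k then a else a + t))
      = (a + t) ^ (r - (k + 1)) := by
    rw [Finset.prod_congr rfl (fun x hx => ?_), Finset.prod_const, Nat.card_Ico]
    have hx' := (Finset.mem_Ico.mp hx).1
    rw [if_neg (by omega), if_neg (by omega)]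
  rw [h1, h2, if_pos rfl]

theorem stmt13_tele_sum (r : ℕ) (a t : ℝ) :
    ∑ j ∈ Finset.range r, a ^ j * t * (a + t) ^ (r - (j + 1)) = (a + t) ^ r - a ^ r := by
  have hs : ∑ j ∈ Finset.range r, a ^ j * t * (a + t) ^ (r - (j + 1))
      = ∑ j ∈ Finset.range r, ((a + t) ^ j * a ^ (r - 1 - j)) * t := by
    rw [← Finset.sum_range_reflect (fun j => ((a + t) ^ j * a ^ (r - 1 - j)) * t) r]
    refine Finset.sum_congr rfl fun j hj => ?_
    have hj' : j < r := Finset.mem_range.mp hj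
    have e1 : r - 1 - (r - 1 - j) = j := by omega
    have e2 : r - (j + 1) = r - 1 - j := by omega
    rw [e1, e2]; ring
  have hg := geom_sum₂_mul (a + t) a r
  rw [add_sub_cancel_left] at hg
  rw [hs, ← Finset.sum_mul, hg]

end Aux

/-- For `A, M ∈ ℝ^{m×r}`,
`det((A+M)ᵀ(A+M)) ≤ det(AᵀA) + (‖A‖ + ‖M‖)^{2r} − ‖A‖^{2r}`. -/
theorem stmt13 (m r : ℕ) (A M : Matrix (Fin m) (Fin r) ℝ) :
    ((A + M)ᵀ * (A + M)).det ≤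
      (Aᵀ * A).det + (specNorm A + specNorm M) ^ (2 * r) - specNorm A ^ (2 * r) := by
  classical
  set a := specNorm A with haDef
  set t := specNorm M with htDef
  have ha : 0 ≤ a := stmt13_specNorm_nonneg A
  have ht : 0 ≤ t := stmt13_specNorm_nonneg M
  set B := A + M with hBDef
  have hBn : specNorm B ≤ a + t := stmt13_specNorm_add_le A M
  have colA : ∀ j, ∑ i, (A i j) ^ 2 ≤ a ^ 2 := fun j => stmt13_col_sq_sum_le A j
  have colM : ∀ j, ∑ i, (M i j) ^ 2 ≤ t ^ 2 := fun j => stmt13_col_sq_sum_le M j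
  have colB : ∀ j, ∑ i, (B i j) ^ 2 ≤ (a + t) ^ 2 :=
    fun j => (stmt13_col_sq_sum_le B j).trans
      (pow_le_pow_left₀ (stmt13_specNorm_nonneg B) hBn 2)
  set C : ℕ → Matrix (Fin m) (Fin r) ℝ :=
    fun k => Matrix.of fun i j => if (j : ℕ) < k then A i j else B i j with hCDef
  have hC0 : C 0 = B := by
    ext i j; simp [hCDef]
  have hCr : C r = A := by
    ext i j; simp [hCDef, j.isLt]
  have step : ∀ k, k < r → Real.sqrt (((C k)ᵀ * (C k)).det)
      ≤ Real.sqrt (((C (k+1))ᵀ * (C (k+1))).det) + a ^ k * t * (a + t) ^ (r - (k + 1)) := by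
    intro k hk
    set i : Fin r := ⟨k, hk⟩ with hiDef
    set W := C (k + 1) with hWDef
    have hWent : ∀ i' (j : Fin r), W i' j = if (j : ℕ) < k + 1 then A i' j else B i' j := by
      intro i' j; rw [hWDef, hCDef]; rfl
    have hCk : C k = W.updateCol i ((fun i' => A i' i) + (fun i' => M i' i)) := by
      ext i' j
      rw [Matrix.updateCol_apply]
      by_cases hj : j = i
      · rw [if_pos hj, hj]
        have hik : ((i : Fin r) : ℕ) = k := rfl
        show (if ((i : Fin r) : ℕ) < k then A i' i else B i' i) = A i' i + M i' i
        rw [if_neg (by omega), hBDef]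
        rfl
      · rw [if_neg hj]
        have hjk : (j : ℕ) ≠ k := fun h => hj (Fin.ext h)
        show (if (j : ℕ) < k then A i' j else B i' j) = W i' j
        rw [hWent]
        by_cases hlt : (j : ℕ) < k
        · rw [if_pos hlt, if_pos (by omega)]
        · rw [if_neg hlt, if_neg (by omega)]
    have hW : W.updateCol i (fun i' => A i' i) = W := by
      ext i' j
      rw [Matrix.updateCol_apply]
      by_cases hj : j = i
      · rw [if_pos hj, hj, hWent]
        have hik : ((i : Fin r) : ℕ) = k := rfl
        rw [if_pos (by omega)]
      · rw [if_neg hj]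
    have htri := stmt13_gram_sqrt_triangle W i (fun i' => A i' i) (fun i' => M i' i)
    rw [hCk]
    refine htri.trans ?_
    rw [hW]
    have hboundD : Real.sqrt (((W.updateCol i (fun i' => M i' i))ᵀ
        * (W.updateCol i (fun i' => M i' i))).det)
        ≤ ∏ j : Fin r, (if (j : ℕ) = k then t else if (j : ℕ) < k then a else a + t) := by
      apply stmt13_sqrt_det_le_prod
      · intro j
        by_cases h1 : (j : ℕ) = k
        · rw [if_pos h1]; exact ht
        · rw [if_neg h1]
          by_cases h2 : (j : ℕ) < k
          · rw [if_pos h2]; exact ha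
          · rw [if_neg h2]; linarith
      · intro j
        by_cases hj : j = i
        · have hjk : (j : ℕ) = k := by rw [hj]
          rw [if_pos hjk]
          rw [Finset.sum_congr rfl fun i' _ => by
            rw [Matrix.updateCol_apply, if_pos hj]]
          exact colM i
        · have hjk : (j : ℕ) ≠ k := fun h => hj (Fin.ext h)
          rw [if_neg hjk]
          have hent : ∀ i', (W.updateCol i (fun i' => M i' i)) i' j
              = if (j : ℕ) < k + 1 then A i' j else B i' j := by
            intro i'
            rw [Matrix.updateCol_apply, if_neg hj, hWent]
          by_cases hlt : (j : ℕ) < k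
          · rw [if_pos hlt]
            rw [Finset.sum_congr rfl fun i' _ => by rw [hent i', if_pos (by omega)]]
            exact colA j
          · rw [if_neg hlt]
            rw [Finset.sum_congr rfl fun i' _ => by rw [hent i', if_neg (by omega)]]
            exact colB j
    have hprod := stmt13_prod_fin_split r k hk a t
    rw [hprod] at hboundD
    linarith [hboundD]
  have tele : ∀ k, k ≤ r → Real.sqrt (((C 0)ᵀ * (C 0)).det)
      ≤ Real.sqrt (((C k)ᵀ * (C k)).det)
        + ∑ j ∈ Finset.range k, a ^ j * t * (a + t) ^ (r - (j + 1)) := by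
    intro k
    induction k with
    | zero => intro _; simp
    | succ k ih =>
      intro hk
      have h1 := ih (Nat.le_of_succ_le hk)
      have h2 := step k hk
      rw [Finset.sum_range_succ]
      linarith
  have htele := tele r le_rfl
  rw [hC0, hCr, stmt13_tele_sum r a t] at htele
  have hpA : Real.sqrt ((Aᵀ * A).det) ≤ a ^ r := by
    have h := stmt13_sqrt_det_le_prod A (fun _ => a) (fun _ => ha) (fun j => colA j)
    simpa using h
  have hq0 : 0 ≤ Real.sqrt ((Bᵀ * B).det) := Real.sqrt_nonneg _
  have hp0 : 0 ≤ Real.sqrt ((Aᵀ * A).det) := Real.sqrt_nonneg _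
  have hq2 : Real.sqrt ((Bᵀ * B).det) ^ 2 = (Bᵀ * B).det :=
    Real.sq_sqrt (stmt13_det_nonneg (stmt13_gram_psd B))
  have hp2 : Real.sqrt ((Aᵀ * A).det) ^ 2 = (Aᵀ * A).det :=
    Real.sq_sqrt (stmt13_det_nonneg (stmt13_gram_psd A))
  have hu : a ^ r ≤ (a + t) ^ r := pow_le_pow_left₀ ha (by linarith) r
  have hpow1 : (a + t) ^ (2 * r) = ((a + t) ^ r) ^ 2 := by rw [pow_mul']
  have hpow2 : a ^ (2 * r) = (a ^ r) ^ 2 := by rw [pow_mul']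
  rw [hpow1, hpow2]
  have key : Real.sqrt ((Bᵀ * B).det) ^ 2
      ≤ (Real.sqrt ((Aᵀ * A).det) + ((a + t) ^ r - a ^ r)) ^ 2 :=
    pow_le_pow_left₀ hq0 htele 2
  nlinarith [key, hpA, hu, hp0, hq2, hp2,
    mul_nonneg (sub_nonneg.mpr hpA) (sub_nonneg.mpr hu)]
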